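/- arXiv:1004.1474 — 2 statements merged into one kernel-verified Lean document; each statement's English description precedes it below -/
import Mathlib

section
/- For any complex numbers α, α†, β, β†, γ, γ†, the linear map ϱ from the centerless twisted Heisenberg–Virasoro algebra H to H⊗H defined by ϱ(L_n) = (nα+γ) I_0⊗I_n + (nα†+γ†) I_n⊗I_0 and ϱ(I_n) = β I_0⊗I_n + β† I_n⊗I_0 is a derivation, i.e., ϱ([x,y]) = x ∗ ϱ(y) − y ∗ ϱ(x) for all x, y ∈ H. -/
noncomputable section
open Finsupp

/-- Sign `(-1)^(a*b)` for parities `a b : ZMod 2`. -/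
def sg (a b : ZMod 2) : ℂ := if a * b = 1 then -1 else 1

/-- A (basis-presented) superalgebra datum: a basis `ι`, a parity function and
structure "constants" giving the bracket of two basis elements. -/
structure SuperData where
  ι : Type
  par : ι → ZMod 2
  br : ι → ι → (ι →₀ ℂ)

namespace SuperData

variable (D : SuperData)

/-- The underlying vector space, with basis `ι`. -/
abbrev V := D.ι →₀ ℂ

/-- The tensor square `V ⊗ V`, modelled on the basis `ι × ι`. -/
abbrev T2 := (D.ι × D.ι) →₀ ℂ

/-- The tensor cube `V ⊗ V ⊗ V`. -/
abbrev T3 := (D.ι × D.ι × D.ι) →₀ ℂ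

/-- The `n`-fold tensor power. -/
abbrev Tn (n : ℕ) := ((Fin n → D.ι) →₀ ℂ)

/-- Basis vectors. -/
def e (i : D.ι) : D.V := Finsupp.single i 1

/-- Linear extension of a map defined on the basis. -/
def lift {α : Type*} {M : Type*} [AddCommGroup M] [Module ℂ M] (g : α → M) :
    (α →₀ ℂ) →ₗ[ℂ] M :=
  Finsupp.linearCombination ℂ g

/-- The bilinear bracket extending `D.br`. -/
def brk : D.V →ₗ[ℂ] D.V →ₗ[ℂ] D.V :=
  lift fun i => lift fun j => D.br i j

/-- Bilinear tensor-product map `V × V → V ⊗ V`. -/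
def tens2 : D.V →ₗ[ℂ] D.V →ₗ[ℂ] D.T2 :=
  lift fun i => lift fun j => Finsupp.single (i, j) 1

/-- Trilinear tensor-product map. -/
def tens3 : D.V →ₗ[ℂ] D.V →ₗ[ℂ] D.V →ₗ[ℂ] D.T3 :=
  lift fun i => lift fun j => lift fun k => Finsupp.single (i, j, k) 1

/-- The super-twist map `τ(x ⊗ y) = (-1)^{|x||y|} y ⊗ x`. -/
def tau : D.T2 →ₗ[ℂ] D.T2 :=
  lift fun p => sg (D.par p.1) (D.par p.2) • Finsupp.single (p.2, p.1) 1

/-- The super-cyclic map `ξ = (1⊗τ)(τ⊗1)` on the tensor cube. -/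
def xi : D.T3 →ₗ[ℂ] D.T3 :=
  lift fun p => sg (D.par p.1) (D.par p.2.1 + D.par p.2.2) •
    Finsupp.single (p.2.1, p.2.2, p.1) 1

/-- The adjoint diagonal action of `V` on `V ⊗ V`:
`x ∗ (a⊗b) = [x,a]⊗b + (-1)^{|x||a|} a⊗[x,b]`. -/
def star2 : D.V →ₗ[ℂ] D.T2 →ₗ[ℂ] D.T2 :=
  lift fun k => lift fun p =>
    D.tens2 (D.br k p.1) (D.e p.2) +
      sg (D.par k) (D.par p.1) • D.tens2 (D.e p.1) (D.br k p.2)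

/-- The adjoint diagonal action of `V` on `V ⊗ V ⊗ V`. -/
def star3 : D.V →ₗ[ℂ] D.T3 →ₗ[ℂ] D.T3 :=
  lift fun k => lift fun p =>
    D.tens3 (D.br k p.1) (D.e p.2.1) (D.e p.2.2) +
      sg (D.par k) (D.par p.1) • D.tens3 (D.e p.1) (D.br k p.2.1) (D.e p.2.2) +
      sg (D.par k) (D.par p.1 + D.par p.2.1) •
        D.tens3 (D.e p.1) (D.e p.2.1) (D.br k p.2.2)

/-- The adjoint diagonal action of `V` on the `n`-fold tensor power, with Koszul signs. -/
def starN (n : ℕ) : D.V →ₗ[ℂ] D.Tn n →ₗ[ℂ] D.Tn n :=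
  lift fun k => lift fun f =>
    ∑ i : Fin n, sg (D.par k) (∑ j ∈ Finset.Iio i, D.par (f j)) •
      Finsupp.mapDomain (Function.update f i) (D.br k (f i))

/-- `c(r) = [r¹²,r¹³] + [r¹²,r²³] + [r¹³,r²³]`, the Yang–Baxter expression. -/
def cybe (r : D.T2) : D.T3 :=
  r.sum fun p a => r.sum fun q b => (a * b) •
    (sg (D.par q.1) (D.par p.2) •
        (D.tens3 (D.br p.1 q.1) (D.e p.2) (D.e q.2) +
          D.tens3 (D.e p.1) (D.e q.1) (D.br p.2 q.2)) +
      D.tens3 (D.e p.1) (D.br p.2 q.1) (D.e q.2))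

/-- The image of `1 - τ` in `V ⊗ V`. -/
def ImSkew : Submodule ℂ D.T2 := LinearMap.range (LinearMap.id - D.tau)

/-- `x` is homogeneous of parity `dp`. -/
def Homog1 (dp : ZMod 2) (x : D.V) : Prop := ∀ i ∈ x.support, D.par i = dp

/-- `t ∈ V ⊗ V` is homogeneous of parity `dp`. -/
def Homog2 (dp : ZMod 2) (t : D.T2) : Prop :=
  ∀ p ∈ t.support, D.par p.1 + D.par p.2 = dp

/-- `t ∈ V ⊗ V` is even. -/
def IsEven2 (t : D.T2) : Prop := D.Homog2 0 t

/-- Super skew-symmetry of the bracket (on homogeneous elements). -/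
def SuperSkew : Prop :=
  ∀ (px py : ZMod 2) (x y : D.V), D.Homog1 px x → D.Homog1 py y →
    D.brk x y = -sg px py • D.brk y x

/-- The graded Jacobi identity
`(-1)^{|x||z|}[x,[y,z]] + (-1)^{|y||x|}[y,[z,x]] + (-1)^{|z||y|}[z,[x,y]] = 0`. -/
def SuperJacobi : Prop :=
  ∀ (px py pz : ZMod 2) (x y z : D.V), D.Homog1 px x → D.Homog1 py y → D.Homog1 pz z →
    sg px pz • D.brk x (D.brk y z) + sg py px • D.brk y (D.brk z x) +
      sg pz py • D.brk z (D.brk x y) = 0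

/-- `D` presents a Lie superalgebra. -/
def IsLieSuper : Prop := D.SuperSkew ∧ D.SuperJacobi

/-- `f : V → V ⊗ V` is a homogeneous derivation of parity `dp`. -/
def IsDer2 (dp : ZMod 2) (f : D.V →ₗ[ℂ] D.T2) : Prop :=
  ∀ i j, f (D.br i j) =
    sg dp (D.par i) • D.star2 (D.e i) (f (D.e j)) -
      sg (D.par j) (dp + D.par i) • D.star2 (D.e j) (f (D.e i))

/-- `f : V → V` is a homogeneous derivation of parity `dp` (adjoint coefficients). -/
def IsDerV (dp : ZMod 2) (f : D.V →ₗ[ℂ] D.V) : Prop :=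
  ∀ i j, f (D.br i j) =
    sg dp (D.par i) • D.brk (D.e i) (f (D.e j)) -
      sg (D.par j) (dp + D.par i) • D.brk (D.e j) (f (D.e i))

/-- `(1 ⊗ Δ)` as a map `V⊗V → V⊗V⊗V`, for `Δ : V → V⊗V`. -/
def oneDelta (Δf : D.V →ₗ[ℂ] D.T2) : D.T2 →ₗ[ℂ] D.T3 :=
  lift fun p => Finsupp.mapDomain (fun q : D.ι × D.ι => (p.1, q.1, q.2)) (Δf (D.e p.2))

/-- `Δf` makes `D` into a Lie superbialgebra: `Δf` respects the `ℤ₂`-grading, has image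
in `Im(1-τ)`, satisfies co-Jacobi, and is compatible with the bracket via the
adjoint diagonal action. -/
def IsSBialg (Δf : D.V →ₗ[ℂ] D.T2) : Prop :=
  (∀ (dp : ZMod 2) (x : D.V), D.Homog1 dp x → D.Homog2 dp (Δf x)) ∧
  (∀ x : D.V, Δf x ∈ D.ImSkew) ∧
  (∀ x : D.V, D.oneDelta Δf (Δf x) + D.xi (D.oneDelta Δf (Δf x)) +
      D.xi (D.xi (D.oneDelta Δf (Δf x))) = 0) ∧
  (∀ i j, Δf (D.br i j) =
    D.star2 (D.e i) (Δf (D.e j)) - sg (D.par i) (D.par j) • D.star2 (D.e j) (Δf (D.e i)))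

end SuperData

open SuperData

/-- Basis of the centerless `N=2` superconformal Neveu–Schwarz algebra:
`L m`, `I m` for `m : ℤ`, and `G s k` denoting `G_{k+1/2}^±` (`s = true` for `+`). -/
inductive NSI : Type
  | L : ℤ → NSI
  | I : ℤ → NSI
  | G : Bool → ℤ → NSI
  deriving DecidableEq

/-- Structure constants of the centerless `N=2` Neveu–Schwarz algebra
(`G s k` stands for `G^±_r` with `r = k + 1/2`). -/
def nsBr : NSI → NSI → (NSI →₀ ℂ)
  | .L m, .L n => ((m : ℂ) - n) • Finsupp.single (.L (m + n)) 1
  | .L m, .I n => (-(n : ℂ)) • Finsupp.single (.I (m + n)) 1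
  | .I m, .L n => (m : ℂ) • Finsupp.single (.I (m + n)) 1
  | .I _, .I _ => 0
  | .L m, .G s k => (((m : ℂ) - 2 * k - 1) / 2) • Finsupp.single (.G s (m + k)) 1
  | .G s k, .L m => (-(((m : ℂ) - 2 * k - 1) / 2)) • Finsupp.single (.G s (m + k)) 1
  | .I m, .G s k => (if s then (1 : ℂ) else -1) • Finsupp.single (.G s (m + k)) 1
  | .G s k, .I m => (if s then (-1 : ℂ) else 1) • Finsupp.single (.G s (m + k)) 1
  | .G true k, .G false l =>
      (2 : ℂ) • Finsupp.single (.L (k + l + 1)) 1 +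
        ((k : ℂ) - l) • Finsupp.single (.I (k + l + 1)) 1
  | .G false k, .G true l =>
      (2 : ℂ) • Finsupp.single (.L (k + l + 1)) 1 +
        ((l : ℂ) - k) • Finsupp.single (.I (k + l + 1)) 1
  | .G true _, .G true _ => 0
  | .G false _, .G false _ => 0

/-- Parity on the Neveu–Schwarz basis. -/
def nsPar : NSI → ZMod 2
  | .G _ _ => 1
  | _ => 0

/-- The centerless `N=2` superconformal Neveu–Schwarz algebra. -/
def NSd : SuperData := ⟨NSI, nsPar, nsBr⟩

/-- Twice the `½ℤ`-degree: `deg L_m = deg I_m = -m`, `deg G_r^± = -r`. -/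
def deg2 : NSI → ℤ
  | .L m => -(2 * m)
  | .I m => -(2 * m)
  | .G _ k => -(2 * k + 1)

/-- Basis of the centerless twisted Heisenberg–Virasoro algebra. -/
inductive HVI : Type
  | L : ℤ → HVI
  | I : ℤ → HVI
  deriving DecidableEq

/-- Structure constants of the centerless twisted Heisenberg–Virasoro algebra. -/
def hvBr : HVI → HVI → (HVI →₀ ℂ)
  | .L m, .L n => ((m : ℂ) - n) • Finsupp.single (.L (m + n)) 1
  | .L m, .I n => (-(n : ℂ)) • Finsupp.single (.I (m + n)) 1
  | .I m, .L n => (m : ℂ) • Finsupp.single (.I (m + n)) 1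
  | .I _, .I _ => 0

/-- The centerless twisted Heisenberg–Virasoro algebra (purely even). -/
def HVd : SuperData := ⟨HVI, fun _ => 0, hvBr⟩

/-- The map `ϱ` with `ϱ(L_n) = (nα+γ) I_0⊗I_n + (nα†+γ†) I_n⊗I_0`,
`ϱ(I_n) = β I_0⊗I_n + β† I_n⊗I_0`. -/
def rho (α α' γ γ' β β' : ℂ) : HVd.V →ₗ[ℂ] HVd.T2 :=
  SuperData.lift fun i => match i with
    | .L n => ((n : ℂ) * α + γ) • Finsupp.single (HVI.I 0, HVI.I n) 1 +
        ((n : ℂ) * α' + γ') • Finsupp.single (HVI.I n, HVI.I 0) 1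
    | .I n => β • Finsupp.single (HVI.I 0, HVI.I n) 1 +
        β' • Finsupp.single (HVI.I n, HVI.I 0) 1


section AuxRho

lemma lift_single' {A : Type*} {M : Type*} [AddCommGroup M] [Module ℂ M]
    (g : A → M) (a : A) (c : ℂ) :
    SuperData.lift g (Finsupp.single a c) = c • g a := by
  simp [SuperData.lift]

lemma hv_tens2_single (a b : HVI) (c d : ℂ) :
    HVd.tens2 (Finsupp.single a c : HVd.V) (Finsupp.single b d : HVd.V) =
      (c * d) • (Finsupp.single (a, b) 1 : HVd.T2) := by
  simp only [SuperData.tens2]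
  erw [lift_single', LinearMap.smul_apply, lift_single']
  rw [smul_smul]

lemma hv_star2_single (k a b : HVI) (c : ℂ) :
    HVd.star2 (Finsupp.single k 1 : HVd.V) (Finsupp.single (a, b) c : HVd.T2) =
      c • (HVd.tens2 (HVd.br k a) (Finsupp.single b 1 : HVd.V) +
        HVd.tens2 (Finsupp.single a 1 : HVd.V) (HVd.br k b)) := by
  have h1 : sg (HVd.par k) (HVd.par a) = 1 := rfl
  simp only [SuperData.star2]
  erw [lift_single', one_smul, lift_single']
  simp only [SuperData.e, h1, one_smul]

lemma hvd_br_LL (m n : ℤ) : HVd.br (HVI.L m) (HVI.L n) =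
    ((m : ℂ) - n) • (Finsupp.single (HVI.L (m + n)) 1 : HVd.V) := rfl

lemma hvd_br_LI (m n : ℤ) : HVd.br (HVI.L m) (HVI.I n) =
    (-(n : ℂ)) • (Finsupp.single (HVI.I (m + n)) 1 : HVd.V) := rfl

lemma hvd_br_IL (m n : ℤ) : HVd.br (HVI.I m) (HVI.L n) =
    (m : ℂ) • (Finsupp.single (HVI.I (m + n)) 1 : HVd.V) := rfl

lemma hvd_br_II (m n : ℤ) : HVd.br (HVI.I m) (HVI.I n) = 0 := rfl

lemma rho_L (α α' γ γ' β β' : ℂ) (n : ℤ) (c : ℂ) :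
    rho α α' γ γ' β β' (Finsupp.single (HVI.L n) c : HVd.V) =
      c • (((n : ℂ) * α + γ) • (Finsupp.single (HVI.I 0, HVI.I n) 1 : HVd.T2) +
        ((n : ℂ) * α' + γ') • (Finsupp.single (HVI.I n, HVI.I 0) 1 : HVd.T2)) := by
  exact lift_single' _ _ _

lemma rho_I (α α' γ γ' β β' : ℂ) (n : ℤ) (c : ℂ) :
    rho α α' γ γ' β β' (Finsupp.single (HVI.I n) c : HVd.V) =
      c • (β • (Finsupp.single (HVI.I 0, HVI.I n) 1 : HVd.T2) +
        β' • (Finsupp.single (HVI.I n, HVI.I 0) 1 : HVd.T2)) := by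
  exact lift_single' _ _ _

lemma rho_basis_der (α α' γ γ' β β' : ℂ) (i j : HVI) :
    rho α α' γ γ' β β' (HVd.br i j) =
      HVd.star2 (Finsupp.single i 1 : HVd.V)
          (rho α α' γ γ' β β' (Finsupp.single j 1 : HVd.V)) -
        HVd.star2 (Finsupp.single j 1 : HVd.V)
          (rho α α' γ γ' β β' (Finsupp.single i 1 : HVd.V)) := by
  cases i with
  | L m =>
    cases j with
    | L n =>
      simp only [map_smul, rho_L, rho_I, LinearMap.smul_apply, map_add, LinearMap.add_apply,
        smul_add, smul_smul, hv_star2_single, hvd_br_LL, hvd_br_LI, hvd_br_IL, hvd_br_II,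
        neg_smul, zero_smul, smul_zero,
        add_zero, zero_add, map_zero, hv_tens2_single, map_neg, LinearMap.neg_apply, smul_neg,
        LinearMap.zero_apply]
      rw [Int.add_comm n m]
      match_scalars <;> ring
    | I n =>
      simp only [map_smul, rho_L, rho_I, LinearMap.smul_apply, map_add, LinearMap.add_apply,
        smul_add, smul_smul, hv_star2_single, hvd_br_LL, hvd_br_LI, hvd_br_IL, hvd_br_II,
        neg_smul, zero_smul, smul_zero,
        add_zero, zero_add, map_zero, hv_tens2_single, map_neg, LinearMap.neg_apply, smul_neg,
        LinearMap.zero_apply]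
      try rw [Int.add_comm n m]
      match_scalars <;> ring
  | I m =>
    cases j with
    | L n =>
      simp only [map_smul, rho_L, rho_I, LinearMap.smul_apply, map_add, LinearMap.add_apply,
        smul_add, smul_smul, hv_star2_single, hvd_br_LL, hvd_br_LI, hvd_br_IL, hvd_br_II,
        neg_smul, zero_smul, smul_zero,
        add_zero, zero_add, map_zero, hv_tens2_single, map_neg, LinearMap.neg_apply, smul_neg,
        LinearMap.zero_apply]
      try rw [Int.add_comm n m]
      match_scalars <;> ring
    | I n =>
      simp only [map_smul, rho_L, rho_I, LinearMap.smul_apply, map_add, LinearMap.add_apply,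
        smul_add, smul_smul, hv_star2_single, hvd_br_LL, hvd_br_LI, hvd_br_IL, hvd_br_II,
        neg_smul, zero_smul, smul_zero,
        add_zero, zero_add, map_zero, hv_tens2_single, map_neg, LinearMap.neg_apply, smul_neg,
        LinearMap.zero_apply]
      try match_scalars <;> ring

end AuxRho

/-- each ϱ is a derivation from the centerless twisted
Heisenberg–Virasoro algebra to its tensor square with the adjoint diagonal action. -/
theorem rho_is_derivation (α α' γ γ' β β' : ℂ) :
    ∀ x y : HVd.V,
      rho α α' γ γ' β β' (HVd.brk x y) =
        HVd.star2 x (rho α α' γ γ' β β' y) - HVd.star2 y (rho α α' γ γ' β β' x) := by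
  intro x y
  induction x using Finsupp.induction_linear with
  | zero => simp
  | add f g hf hg => simp only [map_add, LinearMap.add_apply, hf, hg]; abel
  | single i c =>
    induction y using Finsupp.induction_linear with
    | zero => simp
    | add f g hf hg => simp only [map_add, LinearMap.add_apply, hf, hg]; abel
    | single j d =>
      have key := rho_basis_der α α' γ γ' β β' i j
      have hb : HVd.brk (Finsupp.single i c) (Finsupp.single j d) = (c * d) • HVd.br i j := by
        simp only [SuperData.brk]
        erw [lift_single', LinearMap.smul_apply, lift_single']
        rw [smul_smul]
      have hxc : (Finsupp.single i c : HVd.V) = c • (Finsupp.single i 1 : HVd.V) := by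
        simp [Finsupp.smul_single]
      have hyd : (Finsupp.single j d : HVd.V) = d • (Finsupp.single j 1 : HVd.V) := by
        simp [Finsupp.smul_single]
      rw [hb, map_smul, key, hxc, hyd]
      simp only [map_smul, LinearMap.smul_apply, smul_sub, smul_smul]
      module
end
end

section
/- For the centerless N=2 superconformal Neveu-Schwarz algebra L and any n ≥ 1, if r ∈ L^{⊗n} satisfies x ∗ r = 0 for all x ∈ L (adjoint diagonal action), then r = 0. In particular, L has trivial center and (L⊗L)^L = 0. -/
noncomputable section
open Finsupp

open SuperData

attribute [reducible] NSd

namespace NSproof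
open Finsupp SuperData

/-- Shift on basis indices induced by `ad (L M)` (left bracket by `L M`). -/
def shf (M : ℤ) : NSI → NSI
  | .L n => .L (M + n)
  | .I n => .I (M + n)
  | .G s k => .G s (M + k)

/-- Coefficient of `ad (L M)`. -/
def cf (M : ℤ) : NSI → ℂ
  | .L n => (M : ℂ) - n
  | .I n => -(n : ℂ)
  | .G _ k => ((M : ℂ) - 2 * k - 1) / 2

/-- Coefficient for right bracket with `L M`. -/
def cf2 (M : ℤ) : NSI → ℂ
  | .L n => (n : ℂ) - M
  | .I n => (n : ℂ)
  | .G _ k => -(((M : ℂ) - 2 * k - 1) / 2)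

/-- Shift for right bracket with `L M`. -/
def shf2 (M : ℤ) : NSI → NSI
  | .L n => .L (n + M)
  | .I n => .I (n + M)
  | .G s k => .G s (M + k)

lemma br_L (M : ℤ) (i : NSI) : nsBr (.L M) i = Finsupp.single (shf M i) (cf M i) := by
  cases i <;> simp [nsBr, shf, cf, Finsupp.smul_single]

lemma br_L' (M : ℤ) (i : NSI) : nsBr i (.L M) = Finsupp.single (shf2 M i) (cf2 M i) := by
  cases i <;> simp [nsBr, shf2, cf2, Finsupp.smul_single]

lemma deg2_shf (M : ℤ) (i : NSI) : deg2 (shf M i) = deg2 i - 2 * M := by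
  cases i <;> simp [shf, deg2] <;> ring

lemma deg2_shf2 (M : ℤ) (i : NSI) : deg2 (shf2 M i) = deg2 i - 2 * M := by
  cases i <;> simp [shf2, deg2] <;> ring

lemma shf_inj (M : ℤ) : Function.Injective (shf M) := by
  intro a b h
  cases a <;> cases b <;> simp_all [shf] <;> omega

lemma shf2_inj (M : ℤ) : Function.Injective (shf2 M) := by
  intro a b h
  cases a <;> cases b <;> simp_all [shf2] <;> omega

lemma sg_zero (b : ZMod 2) : sg 0 b = 1 := by simp [sg]

lemma sg_one_zero : sg 1 0 = 1 := by simp [sg]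

lemma nsPar_L (m : ℤ) : nsPar (.L m) = 0 := rfl
lemma nsPar_I (m : ℤ) : nsPar (.I m) = 0 := rfl

end NSproof
namespace NSproof
open Finsupp SuperData

lemma lift_single {α M : Type*} [AddCommGroup M] [Module ℂ M] (g : α → M) (a : α) :
    SuperData.lift g (Finsupp.single a (1:ℂ)) = g a := by
  rw [SuperData.lift, Finsupp.linearCombination_single, one_smul]

lemma starN_e (n : ℕ) (k : NSI) (r : NSd.Tn n) :
    NSd.starN n (NSd.e k) r =
      ∑ f ∈ r.support, r f • ∑ i : Fin n,
        sg (nsPar k) (∑ j ∈ Finset.Iio i, nsPar (f j)) •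
          Finsupp.mapDomain (Function.update f i) (nsBr k (f i)) := by
  unfold SuperData.starN SuperData.e
  rw [lift_single, SuperData.lift, Finsupp.linearCombination_apply, Finsupp.sum]

lemma brk_e (x : NSd.V) (j : NSI) :
    NSd.brk x (NSd.e j) = ∑ i ∈ x.support, x i • nsBr i j := by
  unfold SuperData.brk SuperData.e
  rw [SuperData.lift, Finsupp.linearCombination_apply, Finsupp.sum]
  rw [LinearMap.coe_sum, Finset.sum_apply]
  refine Finset.sum_congr rfl fun i _ => ?_
  rw [LinearMap.smul_apply, lift_single]

lemma star2_e (k : NSI) (t : NSd.T2) :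
    NSd.star2 (NSd.e k) t =
      ∑ p ∈ t.support, t p •
        (NSd.tens2 (nsBr k p.1) (NSd.e p.2) +
          sg (nsPar k) (nsPar p.1) • NSd.tens2 (NSd.e p.1) (nsBr k p.2)) := by
  unfold SuperData.star2 SuperData.e
  rw [lift_single, SuperData.lift, Finsupp.linearCombination_apply, Finsupp.sum]

lemma tens2_single (a b : NSI) (c d : ℂ) :
    NSd.tens2 (Finsupp.single a c) (Finsupp.single b d) =
      Finsupp.single (a, b) (c * d) := by
  unfold SuperData.tens2
  rw [SuperData.lift, Finsupp.linearCombination_single, LinearMap.smul_apply,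
    SuperData.lift, Finsupp.linearCombination_single]
  rw [Finsupp.smul_single, Finsupp.smul_single, smul_eq_mul, smul_eq_mul, mul_one]

end NSproof
namespace NSproof
open Finsupp SuperData

lemma collide {n : ℕ} (B : ℕ) (M : ℤ) (hM : (B:ℤ) < M) (f f₀ : Fin n → NSI) (i i₀ : Fin n)
    (hf : ∀ j, (deg2 (f j)).natAbs ≤ B) (hf₀ : ∀ j, (deg2 (f₀ j)).natAbs ≤ B)
    (h : Function.update f i (shf M (f i)) = Function.update f₀ i₀ (shf M (f₀ i₀))) :
    f = f₀ ∧ i = i₀ := by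
  have hii : i = i₀ := by
    by_contra hne
    have h1 := congrFun h i
    rw [Function.update_self, Function.update_of_ne hne] at h1
    have hd := deg2_shf M (f i)
    rw [h1] at hd
    have b1 := hf i; have b2 := hf₀ i
    omega
  subst hii
  refine ⟨funext fun j => ?_, rfl⟩
  rcases eq_or_ne j i with rfl | hj
  · have h1 := congrFun h j
    rw [Function.update_self, Function.update_self] at h1
    exact shf_inj M h1
  · have h1 := congrFun h j
    rwa [Function.update_of_ne hj, Function.update_of_ne hj] at h1

lemma cf_eq_zero {B : ℕ} {M : ℤ} (hM : M = (B:ℤ) + 1) (i : NSI)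
    (hb : (deg2 i).natAbs ≤ B) (h : cf M i = 0) : i = .I 0 := by
  cases i with
  | L m =>
    exfalso
    simp only [cf] at h
    have : (M : ℂ) = (m : ℂ) := sub_eq_zero.mp h
    have hMm : M = m := by exact_mod_cast this
    simp only [deg2] at hb
    omega
  | I m =>
    simp only [cf, neg_eq_zero, Int.cast_eq_zero] at h
    rw [h]
  | G s k =>
    exfalso
    simp only [cf, div_eq_zero_iff] at h
    have h' : (M : ℂ) = ((2 * k + 1 : ℤ) : ℂ) := by
      push_cast
      rcases h with h | h
      · linear_combination h
      · norm_num at h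
    have hMk : M = 2 * k + 1 := by exact_mod_cast h'
    simp only [deg2] at hb
    omega

lemma Tn_inv (n : ℕ) (hn : 1 ≤ n) (r : NSd.Tn n)
    (h : ∀ x : NSd.V, NSd.starN n x r = 0) : r = 0 := by
  classical
  obtain ⟨B, hbound⟩ : ∃ B : ℕ, ∀ f ∈ r.support, ∀ j, (deg2 (f j)).natAbs ≤ B := by
    refine ⟨r.support.sup (fun f => Finset.univ.sup fun j => (deg2 (f j)).natAbs),
      fun f hf j => ?_⟩
    exact le_trans
      (Finset.le_sup (f := fun j => (deg2 (f j)).natAbs) (Finset.mem_univ j))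
      (Finset.le_sup (f := fun f => Finset.univ.sup fun j => (deg2 (f j)).natAbs) hf)
  set M : ℤ := (B : ℤ) + 1 with hMdef
  have hMB : (B:ℤ) < M := by omega
  have stepA : ∀ f ∈ r.support, ∀ i : Fin n, f i = .I 0 := by
    intro f₀ hf₀ i₀
    have h0 := h (NSd.e (.L M))
    rw [starN_e] at h0
    have h0' : ∑ f ∈ r.support, r f • ∑ i : Fin n,
        Finsupp.single (Function.update f i (shf M (f i))) (cf M (f i)) = (0 : NSd.Tn n) := by
      rw [← h0]
      refine Finset.sum_congr rfl fun f _ => ?_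
      congr 1
      refine Finset.sum_congr rfl fun i _ => ?_
      rw [nsPar_L, sg_zero, one_smul, br_L, Finsupp.mapDomain_single]
    set g₀ := Function.update f₀ i₀ (shf M (f₀ i₀)) with hg₀
    have hev : ∑ f ∈ r.support, r f *
        ∑ i : Fin n, (Finsupp.single (Function.update f i (shf M (f i))) (cf M (f i))) g₀ = 0 := by
      have := congrArg (fun z : NSd.Tn n => z g₀) h0'
      simpa [Finsupp.finset_sum_apply] using this
    have key : ∑ f ∈ r.support, r f *
        ∑ i : Fin n, (Finsupp.single (Function.update f i (shf M (f i))) (cf M (f i))) g₀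
        = r f₀ * cf M (f₀ i₀) := by
      rw [Finset.sum_eq_single_of_mem f₀ hf₀]
      · congr 1
        rw [Finset.sum_eq_single_of_mem i₀ (Finset.mem_univ i₀)]
        · rw [hg₀, Finsupp.single_apply, if_pos rfl]
        · intro i _ hne
          rw [hg₀, Finsupp.single_apply, if_neg]
          intro hc
          exact hne (collide B M hMB f₀ f₀ i i₀ (hbound f₀ hf₀) (hbound f₀ hf₀) hc).2
      · intro f hf hne
        rw [Finset.sum_eq_zero, mul_zero]
        intro i _
        rw [hg₀, Finsupp.single_apply, if_neg]
        intro hc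
        exact hne (collide B M hMB f f₀ i i₀ (hbound f hf) (hbound f₀ hf₀) hc).1
    rw [key] at hev
    rcases mul_eq_zero.mp hev with h' | h'
    · exact absurd h' (Finsupp.mem_support_iff.mp hf₀)
    · exact cf_eq_zero hMdef _ (hbound f₀ hf₀ i₀) h'
  have hconst : ∀ f ∈ r.support, f = fun _ => NSI.I 0 :=
    fun f hf => funext fun i => stepA f hf i
  have hval : r (fun _ => NSI.I 0) = 0 := by
    by_contra hne
    have hf₀ : (fun _ => NSI.I 0) ∈ r.support := Finsupp.mem_support_iff.mpr hne
    have hsupp : r.support = {fun _ => NSI.I 0} :=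
      Finset.eq_singleton_iff_unique_mem.mpr ⟨hf₀, fun f hf => hconst f hf⟩
    have h0 := h (NSd.e (.G true 0))
    rw [starN_e, hsupp, Finset.sum_singleton] at h0
    have hbody : ∀ i : Fin n,
        sg (nsPar (.G true 0)) (∑ j ∈ Finset.Iio i, nsPar ((fun _ => NSI.I 0) j)) •
          Finsupp.mapDomain (Function.update (fun _ => NSI.I 0) i)
            (nsBr (.G true 0) ((fun (_ : Fin n) => NSI.I 0) i)) =
        Finsupp.single (Function.update (fun _ => NSI.I 0) i (NSI.G true 0)) (-1 : ℂ) := by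
      intro i
      have h1 : (∑ j ∈ Finset.Iio i, nsPar ((fun (_ : Fin n) => NSI.I 0) j)) = 0 := by
        simp [nsPar]
      have h2 : nsBr (.G true 0) ((fun (_ : Fin n) => NSI.I 0) i)
          = Finsupp.single (NSI.G true 0) (-1 : ℂ) := by
        show nsBr (.G true 0) (.I 0) = _
        simp [nsBr]
      rw [h1, h2, Finsupp.mapDomain_single]
      rw [show nsPar (NSI.G true 0) = 1 from rfl, sg_one_zero, one_smul]
    rw [Finset.sum_congr rfl fun i _ => hbody i] at h0
    set i₁ : Fin n := ⟨0, hn⟩ with hi₁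
    set g₁ := Function.update (fun _ => NSI.I 0) i₁ (NSI.G true 0) with hg₁
    have hev : r (fun _ => NSI.I 0) *
        ∑ i : Fin n, (Finsupp.single (Function.update (fun _ => NSI.I 0) i (NSI.G true 0)) (-1 : ℂ)) g₁ = 0 := by
      have := congrArg (fun z : NSd.Tn n => z g₁) h0
      simpa [Finsupp.finset_sum_apply] using this
    have hsum : (∑ i : Fin n,
        (Finsupp.single (Function.update (fun _ => NSI.I 0) i (NSI.G true 0)) (-1 : ℂ)) g₁) = -1 := by
      rw [Finset.sum_eq_single_of_mem i₁ (Finset.mem_univ i₁)]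
      · rw [hg₁, Finsupp.single_apply, if_pos rfl]
      · intro i _ hne
        rw [hg₁, Finsupp.single_apply, if_neg]
        intro hc
        have := congrFun hc i
        rw [Function.update_self, Function.update_of_ne hne] at this
        exact NSI.noConfusion this
    rw [hsum, mul_neg_one, neg_eq_zero] at hev
    exact hne hev
  ext f
  by_cases hf : f ∈ r.support
  · rw [hconst f hf]
    exact hval
  · exact Finsupp.notMem_support_iff.mp hf

end NSproof
namespace NSproof
open Finsupp SuperData

lemma cf2_eq_zero {B : ℕ} {M : ℤ} (hM : M = (B:ℤ) + 1) (i : NSI)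
    (hb : (deg2 i).natAbs ≤ B) (h : cf2 M i = 0) : i = .I 0 := by
  cases i with
  | L m =>
    exfalso
    simp only [cf2] at h
    have : (m : ℂ) = (M : ℂ) := sub_eq_zero.mp h
    have hMm : m = M := by exact_mod_cast this
    simp only [deg2] at hb
    omega
  | I m =>
    simp only [cf2, Int.cast_eq_zero] at h
    rw [h]
  | G s k =>
    exfalso
    simp only [cf2, neg_eq_zero, div_eq_zero_iff] at h
    have h' : (M : ℂ) = ((2 * k + 1 : ℤ) : ℂ) := by
      push_cast
      rcases h with h | h
      · linear_combination h
      · norm_num at h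
    have hMk : M = 2 * k + 1 := by exact_mod_cast h'
    simp only [deg2] at hb
    omega

lemma V_inv (x : NSd.V) (h : ∀ y : NSd.V, NSd.brk x y = 0) : x = 0 := by
  classical
  obtain ⟨B, hbound⟩ : ∃ B : ℕ, ∀ i ∈ x.support, (deg2 i).natAbs ≤ B :=
    ⟨x.support.sup fun i => (deg2 i).natAbs, fun i hi => Finset.le_sup (f := fun i => (deg2 i).natAbs) hi⟩
  set M : ℤ := (B:ℤ) + 1 with hMdef
  have stepA : ∀ i ∈ x.support, i = .I 0 := by
    intro i₀ hi₀
    have h0 := h (NSd.e (.L M))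
    rw [brk_e] at h0
    have h0' : ∑ i ∈ x.support, x i • Finsupp.single (shf2 M i) (cf2 M i) = (0 : NSd.V) := by
      rw [← h0]
      exact Finset.sum_congr rfl fun i _ => by rw [br_L']
    have hev : ∑ i ∈ x.support, x i * (Finsupp.single (shf2 M i) (cf2 M i)) (shf2 M i₀) = 0 := by
      have := congrArg (fun z : NSd.V => z (shf2 M i₀)) h0'
      simp only [Finsupp.finset_sum_apply, Finsupp.smul_apply, smul_eq_mul,
        Finsupp.coe_zero, Pi.zero_apply] at this
      exact this
    have key : (∑ i ∈ x.support, x i * (Finsupp.single (shf2 M i) (cf2 M i)) (shf2 M i₀))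
        = x i₀ * cf2 M i₀ := by
      rw [Finset.sum_eq_single_of_mem i₀ hi₀]
      · rw [Finsupp.single_apply, if_pos rfl]
      · intro i _ hne
        rw [Finsupp.single_apply, if_neg, mul_zero]
        intro hc
        exact hne (shf2_inj M hc)
    rw [key] at hev
    rcases mul_eq_zero.mp hev with h' | h'
    · exact absurd h' (Finsupp.mem_support_iff.mp hi₀)
    · exact cf2_eq_zero hMdef _ (hbound i₀ hi₀) h'
  have hval : x (.I 0) = 0 := by
    by_contra hne
    have hi₀ : (NSI.I 0) ∈ x.support := Finsupp.mem_support_iff.mpr hne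
    have hsupp : x.support = {NSI.I 0} :=
      Finset.eq_singleton_iff_unique_mem.mpr ⟨hi₀, stepA⟩
    have h0 := h (NSd.e (.G true 0))
    rw [brk_e, hsupp, Finset.sum_singleton] at h0
    have h2 : nsBr (.I 0) (.G true 0) = Finsupp.single (NSI.G true 0) (1:ℂ) := by
      simp [nsBr]
    rw [h2] at h0
    have := congrArg (fun z : NSd.V => z (NSI.G true 0)) h0
    simp [Finsupp.single_apply] at this
    exact hne this
  ext i
  by_cases hi : i ∈ x.support
  · rw [stepA i hi]
    exact hval
  · exact Finsupp.notMem_support_iff.mp hi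

end NSproof
namespace NSproof
open Finsupp SuperData

lemma e_def (a : NSI) : NSd.e a = Finsupp.single a (1:ℂ) := rfl

lemma shf_ne {B : ℕ} {M : ℤ} (hM : (B:ℤ) < M) {a b : NSI}
    (ha : (deg2 a).natAbs ≤ B) (hb : (deg2 b).natAbs ≤ B) : shf M a ≠ b := by
  intro h
  have hd := deg2_shf M a
  rw [h] at hd
  omega

lemma T2_inv (t : NSd.T2) (h : ∀ x : NSd.V, NSd.star2 x t = 0) : t = 0 := by
  classical
  obtain ⟨B, hbound⟩ : ∃ B : ℕ, ∀ p ∈ t.support,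
      (deg2 p.1).natAbs ≤ B ∧ (deg2 p.2).natAbs ≤ B := by
    refine ⟨t.support.sup fun p => max (deg2 p.1).natAbs (deg2 p.2).natAbs, fun p hp => ?_⟩
    constructor
    · exact le_trans (le_max_left _ _)
        (Finset.le_sup (f := fun p : NSI × NSI => max (deg2 p.1).natAbs (deg2 p.2).natAbs) hp)
    · exact le_trans (le_max_right _ _)
        (Finset.le_sup (f := fun p : NSI × NSI => max (deg2 p.1).natAbs (deg2 p.2).natAbs) hp)
  set M : ℤ := (B:ℤ) + 1 with hMdef
  have hMB : (B:ℤ) < M := by omega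
  have h0' : ∑ p ∈ t.support, t p •
      ((Finsupp.single (shf M p.1, p.2) (cf M p.1) : NSd.T2) +
        (Finsupp.single (p.1, shf M p.2) (cf M p.2) : NSd.T2)) = (0 : NSd.T2) := by
    rw [← h (NSd.e (.L M)), star2_e]
    refine Finset.sum_congr rfl fun p _ => ?_
    rw [nsPar_L, sg_zero, one_smul, br_L, br_L, e_def, e_def, tens2_single, tens2_single,
      mul_one, one_mul]
  have heval : ∀ g₀ : NSI × NSI,
      ∑ p ∈ t.support, t p *
        (((Finsupp.single (shf M p.1, p.2) (cf M p.1) : NSd.T2)) g₀ +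
          ((Finsupp.single (p.1, shf M p.2) (cf M p.2) : NSd.T2)) g₀) = 0 := by
    intro g₀
    have := congrArg (fun z : NSd.T2 => z g₀) h0'
    simp only [Finsupp.finset_sum_apply, Finsupp.smul_apply, Finsupp.add_apply, smul_eq_mul,
      Finsupp.coe_zero, Pi.zero_apply] at this
    exact this
  have stepA : ∀ p ∈ t.support, p.1 = .I 0 := by
    intro p₀ hp₀
    have hev := heval (shf M p₀.1, p₀.2)
    have key : ∑ p ∈ t.support, t p *
        (((Finsupp.single (shf M p.1, p.2) (cf M p.1) : NSd.T2)) (shf M p₀.1, p₀.2) +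
          ((Finsupp.single (p.1, shf M p.2) (cf M p.2) : NSd.T2)) (shf M p₀.1, p₀.2))
        = t p₀ * cf M p₀.1 := by
      rw [Finset.sum_eq_single_of_mem p₀ hp₀]
      · rw [Finsupp.single_apply, if_pos rfl, Finsupp.single_apply, if_neg, add_zero]
        intro hc
        rw [Prod.mk.injEq] at hc
        exact shf_ne hMB (hbound p₀ hp₀).2 (hbound p₀ hp₀).2 hc.2
      · intro p hp hne
        rw [Finsupp.single_apply, if_neg, Finsupp.single_apply, if_neg, add_zero, mul_zero]
        · intro hc
          rw [Prod.mk.injEq] at hc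
          exact shf_ne hMB (hbound p hp).2 (hbound p₀ hp₀).2 hc.2
        · intro hc
          rw [Prod.mk.injEq] at hc
          exact hne (Prod.ext (shf_inj M hc.1) hc.2)
    rw [key] at hev
    rcases mul_eq_zero.mp hev with h' | h'
    · exact absurd h' (Finsupp.mem_support_iff.mp hp₀)
    · exact cf_eq_zero hMdef _ (hbound p₀ hp₀).1 h'
  have stepB : ∀ p ∈ t.support, p.2 = .I 0 := by
    intro p₀ hp₀
    have hev := heval (p₀.1, shf M p₀.2)
    have key : ∑ p ∈ t.support, t p *
        (((Finsupp.single (shf M p.1, p.2) (cf M p.1) : NSd.T2)) (p₀.1, shf M p₀.2) +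
          ((Finsupp.single (p.1, shf M p.2) (cf M p.2) : NSd.T2)) (p₀.1, shf M p₀.2))
        = t p₀ * cf M p₀.2 := by
      rw [Finset.sum_eq_single_of_mem p₀ hp₀]
      · rw [Finsupp.single_apply, if_neg, Finsupp.single_apply, if_pos rfl, zero_add]
        intro hc
        rw [Prod.mk.injEq] at hc
        exact shf_ne hMB (hbound p₀ hp₀).1 (hbound p₀ hp₀).1 hc.1
      · intro p hp hne
        rw [Finsupp.single_apply, if_neg, Finsupp.single_apply, if_neg, add_zero, mul_zero]
        · intro hc
          rw [Prod.mk.injEq] at hc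
          exact hne (Prod.ext hc.1 (shf_inj M hc.2))
        · intro hc
          rw [Prod.mk.injEq] at hc
          exact shf_ne hMB (hbound p hp).1 (hbound p₀ hp₀).1 hc.1
    rw [key] at hev
    rcases mul_eq_zero.mp hev with h' | h'
    · exact absurd h' (Finsupp.mem_support_iff.mp hp₀)
    · exact cf_eq_zero hMdef _ (hbound p₀ hp₀).2 h'
  have hval : t (NSI.I 0, NSI.I 0) = 0 := by
    by_contra hne
    have hp₀ : (NSI.I 0, NSI.I 0) ∈ t.support := Finsupp.mem_support_iff.mpr hne
    have hsupp : t.support = {(NSI.I 0, NSI.I 0)} := by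
      apply Finset.eq_singleton_iff_unique_mem.mpr
      refine ⟨hp₀, fun p hp => ?_⟩
      refine Prod.ext_iff.mpr ⟨?_, ?_⟩
      · exact stepA p hp
      · exact stepB p hp
    have h0 := h (NSd.e (.G true 0))
    rw [star2_e, hsupp, Finset.sum_singleton] at h0
    have h2 : nsBr (.G true 0) (.I 0) = Finsupp.single (NSI.G true 0) (-1:ℂ) := by
      simp [nsBr]
    have h0' : t (NSI.I 0, NSI.I 0) •
        (Finsupp.single (NSI.G true 0, NSI.I 0) (-1:ℂ) +
          Finsupp.single (NSI.I 0, NSI.G true 0) (-1:ℂ)) = (0 : NSd.T2) := by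
      rw [← h0]
      show _ = t (NSI.I 0, NSI.I 0) •
        (NSd.tens2 (nsBr (.G true 0) (.I 0)) (NSd.e (.I 0)) +
          sg (nsPar (.G true 0)) (nsPar (.I 0)) •
            NSd.tens2 (NSd.e (.I 0)) (nsBr (.G true 0) (.I 0)))
      rw [h2, e_def, tens2_single, tens2_single, show nsPar (NSI.G true 0) = 1 from rfl,
        nsPar_I, sg_one_zero, one_smul, mul_one, one_mul]
    have := congrArg (fun z : NSd.T2 => z (NSI.G true 0, NSI.I 0)) h0'
    simp [Finsupp.single_apply] at this
    exact hne this
  ext p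
  by_cases hp : p ∈ t.support
  · have hp' : p = (NSI.I 0, NSI.I 0) := by
      refine Prod.ext_iff.mpr ⟨?_, ?_⟩
      · exact stepA p hp
      · exact stepB p hp
    rw [hp']
    exact hval
  · exact Finsupp.notMem_support_iff.mp hp

end NSproof
/-- for any `n ≥ 1`, the only element of `L^{⊗n}` annihilated by the
adjoint diagonal action of every element of `L` is `0`; in particular `L` has trivial
center and `(L ⊗ L)^L = 0`. -/
theorem NS_tensor_invariants_trivial :
    (∀ n : ℕ, 1 ≤ n → ∀ r : NSd.Tn n, (∀ x : NSd.V, NSd.starN n x r = 0) → r = 0) ∧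
    (∀ x : NSd.V, (∀ y : NSd.V, NSd.brk x y = 0) → x = 0) ∧
    (∀ t : NSd.T2, (∀ x : NSd.V, NSd.star2 x t = 0) → t = 0) := by
  exact ⟨fun n hn r h => NSproof.Tn_inv n hn r h,
    fun x h => NSproof.V_inv x h,
    fun t h => NSproof.T2_inv t h⟩
end
end
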